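/- If Φ is a semiflow monotone with respect to a cone C (x − y ∈ C implies Φ_t(x) − Φ_t(y) ∈ C for all t ≥ 0) and Φ is strongly monotone (x ≠ y and x − y ∈ C imply Φ_t(x) − Φ_t(y) ∈ Int C for t > 0), then the set Q of points with pseudo-ordered positive semiorbit is open in X. -/
import Mathlib


/-- If `Φ` is a continuous semiflow monotone with respect to a closed solid cone
`C` and strongly monotone (`x ≠ y` and `x - y ∈ C` imply
`Φ t x - Φ t y ∈ interior C` for `t > 0`), then the set `Q` of points with
pseudo-ordered positive semiorbit is open. -/
theorem pseudo_ordered_set_is_open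
    {X : Type*} [NormedAddCommGroup X] [NormedSpace ℝ X]
    (C : Set X) (hCcl : IsClosed C) (hCint : (interior C).Nonempty)
    (hCcone : ∀ l : ℝ, ∀ v ∈ C, l • v ∈ C)
    (Φ : ℝ → X → X)
    (hΦ0 : ∀ x : X, Φ 0 x = x)
    (hsemi : ∀ t s : ℝ, 0 ≤ t → 0 ≤ s → ∀ x : X, Φ t (Φ s x) = Φ (t + s) x)
    (hcont : ContinuousOn (fun p : ℝ × X => Φ p.1 p.2) (Set.Ici (0:ℝ) ×ˢ Set.univ))
    (hmono : ∀ x y : X, x - y ∈ C → ∀ t : ℝ, 0 ≤ t → Φ t x - Φ t y ∈ C)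
    (hsmono : ∀ x y : X, x ≠ y → x - y ∈ C → ∀ t : ℝ, 0 < t →
      Φ t x - Φ t y ∈ interior C) :
    IsOpen {x : X | ∃ t₁ : ℝ, 0 ≤ t₁ ∧ ∃ t₂ : ℝ, 0 ≤ t₂ ∧
      Φ t₁ x ≠ Φ t₂ x ∧ Φ t₁ x - Φ t₂ x ∈ C} := by
  -- continuity of `Φ t` for each fixed `t ≥ 0`
  have contΦ : ∀ t : ℝ, 0 ≤ t → Continuous (Φ t) := by
    intro t ht
    have : Continuous ((fun p : ℝ × X => Φ p.1 p.2) ∘ (fun u : X => (t, u))) :=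
      hcont.comp_continuous (by continuity) (fun u => ⟨ht, Set.mem_univ u⟩)
    exact this
  by_cases h0 : (0 : X) ∈ interior C
  · -- degenerate case: `C = univ`
    have hCuniv : C = Set.univ := by
      obtain ⟨ε, hε, hball⟩ := Metric.mem_nhds_iff.mp (isOpen_interior.mem_nhds h0)
      ext w
      simp only [Set.mem_univ, iff_true]
      by_cases hw : w = 0
      · subst hw; exact interior_subset h0
      · have hwn : 0 < ‖w‖ := norm_pos_iff.mpr hw
        set v : X := (ε / (2 * ‖w‖)) • w with hv
        have hvball : v ∈ Metric.ball (0 : X) ε := by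
          simp only [Metric.mem_ball, dist_zero_right, hv, norm_smul, Real.norm_eq_abs]
          have : |ε / (2 * ‖w‖)| = ε / (2 * ‖w‖) := abs_of_pos (by positivity)
          rw [this]
          rw [div_mul_eq_mul_div, mul_comm]
          rw [div_lt_iff₀ (by positivity)]
          nlinarith
        have hvC : v ∈ C := interior_subset (hball hvball)
        have : (2 * ‖w‖ / ε) • v ∈ C := hCcone _ v hvC
        have heq : (2 * ‖w‖ / ε) • v = w := by
          rw [hv, smul_smul]
          rw [div_mul_div_comm]
          rw [mul_comm ε (2 * ‖w‖)]
          rw [div_self (by positivity)]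
          rw [one_smul]
        rwa [heq] at this
    -- the set equals a union of open sets
    have hset : {x : X | ∃ t₁ : ℝ, 0 ≤ t₁ ∧ ∃ t₂ : ℝ, 0 ≤ t₂ ∧
        Φ t₁ x ≠ Φ t₂ x ∧ Φ t₁ x - Φ t₂ x ∈ C} =
        ⋃ t ∈ Set.Ici (0:ℝ), {x : X | Φ t x ≠ x} := by
      ext x
      simp only [Set.mem_setOf_eq, Set.mem_iUnion, Set.mem_Ici, exists_prop]
      constructor
      · rintro ⟨t₁, ht₁, t₂, ht₂, hne, -⟩
        by_cases h : Φ t₁ x = x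
        · exact ⟨t₂, ht₂, fun h' => hne (by rw [h, h'])⟩
        · exact ⟨t₁, ht₁, h⟩
      · rintro ⟨t, ht, hne⟩
        refine ⟨t, ht, 0, le_refl 0, ?_, by rw [hCuniv]; trivial⟩
        rw [hΦ0]; exact hne
    rw [hset]
    exact isOpen_biUnion fun t ht =>
      (isClosed_eq (contΦ t ht) continuous_id).isOpen_compl
  · -- main case: `0 ∉ interior C`
    rw [isOpen_iff_mem_nhds]
    rintro x ⟨t₁, ht₁, t₂, ht₂, hne, hmem⟩
    set F : X → X := fun u => Φ (1 + t₁) u - Φ (1 + t₂) u with hF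
    have hFcont : Continuous F :=
      (contΦ (1 + t₁) (by linarith)).sub (contΦ (1 + t₂) (by linarith))
    have hFx : F x ∈ interior C := by
      have h1 : Φ 1 (Φ t₁ x) - Φ 1 (Φ t₂ x) ∈ interior C :=
        hsmono _ _ hne hmem 1 one_pos
      rwa [hsemi 1 t₁ zero_le_one ht₁, hsemi 1 t₂ zero_le_one ht₂] at h1
    have hnb : F ⁻¹' (interior C) ∈ nhds x :=
      (isOpen_interior.preimage hFcont).mem_nhds hFx
    refine Filter.mem_of_superset hnb ?_
    intro y hy
    refine ⟨1 + t₁, by linarith, 1 + t₂, by linarith, ?_, interior_subset hy⟩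
    intro heq
    apply h0
    have hy' : F y ∈ interior C := hy
    have : F y = 0 := by simp [hF, heq]
    rwa [this] at hy'
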